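/- (Shyr–Thierrin) For words p and q over an alphabet Σ, the two-element set {p, q} is a code if and only if pq ≠ qp. -/

import Mathlib

/-- `wpow v n` is the word `vⁿ`, the `n`-fold concatenation of the word `v` with itself. -/
def wpow {α : Type*} (v : List α) : ℕ → List α
  | 0 => []
  | n + 1 => v ++ wpow v n

/-- A nonempty word `u` is primitive if `u = vⁿ` implies `n = 1`. -/
def Primitive {α : Type*} (u : List α) : Prop :=
  u ≠ [] ∧ ∀ (v : List α) (n : ℕ), u = wpow v n → n = 1

/-- A set of words `C` is a code if any two factorizations of a word into elements
of `C` coincide. -/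
def IsCode {α : Type*} (C : Set (List α)) : Prop :=
  ∀ l₁ l₂ : List (List α), (∀ u ∈ l₁, u ∈ C) → (∀ v ∈ l₂, v ∈ C) →
    l₁.flatten = l₂.flatten → l₁ = l₂

section Aux

variable {α : Type*}

lemma expand_exists (x z : List α) (A : List (List α))
    (h : ∀ u ∈ A, u = x ∨ u = x ++ z) :
    ∃ A' : List (List α), (∀ u ∈ A', u = x ∨ u = z) ∧ A'.flatten = A.flatten := by
  induction A with
  | nil => exact ⟨[], by simp, rfl⟩
  | cons c A₁ ih =>
    obtain ⟨A', hm, hf⟩ := ih (fun u hu => h u (List.mem_cons_of_mem _ hu))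
    rcases h c (List.mem_cons_self) with hc | hc
    · refine ⟨x :: A', ?_, by simp [hf, hc]⟩
      intro u hu
      rcases List.mem_cons.mp hu with rfl | hu
      · exact Or.inl rfl
      · exact hm u hu
    · refine ⟨x :: z :: A', ?_, by simp [hf, hc]⟩
      intro u hu
      rcases List.mem_cons.mp hu with rfl | hu
      · exact Or.inl rfl
      rcases List.mem_cons.mp hu with rfl | hu
      · exact Or.inr rfl
      · exact hm u hu

lemma key_comm : ∀ n : ℕ, ∀ x y : List α, ∀ A B : List (List α),
    x.length + y.length ≤ n →
    (∀ u ∈ A, u = x ∨ u = y) → (∀ u ∈ B, u = x ∨ u = y) →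
    x ++ A.flatten = y ++ B.flatten → x ++ y = y ++ x := by
  intro n
  induction n with
  | zero =>
    intro x y A B hn _ _ _
    have hx : x = [] := List.length_eq_zero_iff.mp (by omega)
    have hy : y = [] := List.length_eq_zero_iff.mp (by omega)
    simp [hx, hy]
  | succ n ih =>
    have main : ∀ x y : List α, ∀ A B : List (List α),
        x.length ≤ y.length → x.length + y.length ≤ n + 1 →
        (∀ u ∈ A, u = x ∨ u = y) → (∀ u ∈ B, u = x ∨ u = y) →
        x ++ A.flatten = y ++ B.flatten → x ++ y = y ++ x := by
      intro x y A B hxy hn hA hB heq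
      by_cases hx : x = []
      · simp [hx]
      have hpre : x <+: y :=
        List.prefix_of_prefix_length_le ⟨A.flatten, heq⟩ ⟨B.flatten, rfl⟩ hxy
      obtain ⟨z, rfl⟩ := hpre
      by_cases hz : z = []
      · simp [hz]
      have heq' : A.flatten = z ++ B.flatten := by
        rw [List.append_assoc] at heq
        exact List.append_cancel_left heq
      cases A with
      | nil =>
        exfalso
        apply hz
        have := heq'.symm
        simp only [List.flatten_nil] at this
        exact (List.append_eq_nil_iff.mp this).1
      | cons c A₁ =>
        obtain ⟨B', hB'm, hB'f⟩ := expand_exists x z B hB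
        have hA₁ : ∀ u ∈ A₁, u = x ∨ u = x ++ z :=
          fun u hu => hA u (List.mem_cons_of_mem _ hu)
        obtain ⟨A', hA'm, hA'f⟩ := expand_exists x z A₁ hA₁
        have hlen : x.length + z.length ≤ n := by
          have hx1 : 1 ≤ x.length := by
            cases x with
            | nil => exact absurd rfl hx
            | cons _ _ => simp
          simp only [List.length_append] at hn
          omega
        have hcomm : x ++ z = z ++ x := by
          rcases hA c (List.mem_cons_self) with hc | hc
          · -- c = x
            apply ih x z A' B' hlen hA'm hB'm
            rw [hA'f, hB'f]
            have : (c :: A₁).flatten = c ++ A₁.flatten := List.flatten_cons ..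
            rw [this, hc] at heq'
            exact heq'
          · -- c = x ++ z
            apply ih x z (z :: A') B' hlen ?_ hB'm ?_
            · intro u hu
              rcases List.mem_cons.mp hu with rfl | hu
              · exact Or.inr rfl
              · exact hA'm u hu
            · rw [hB'f]
              have : (c :: A₁).flatten = c ++ A₁.flatten := List.flatten_cons ..
              rw [this, hc] at heq'
              simp only [List.flatten_cons, hA'f]
              rw [← List.append_assoc]
              exact heq'
        calc x ++ (x ++ z) = x ++ (z ++ x) := by rw [hcomm]
          _ = (x ++ z) ++ x := by rw [List.append_assoc]
    intro x y A B hn hA hB heq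
    rcases le_total x.length y.length with h | h
    · exact main x y A B h hn hA hB heq
    · exact (main y x B A h (by omega) (fun u hu => (hB u hu).symm)
        (fun u hu => (hA u hu).symm) heq.symm).symm

lemma flatten_eq_nil_forces (l : List (List α)) (h : ∀ u ∈ l, u ≠ [])
    (hf : l.flatten = []) : l = [] := by
  cases l with
  | nil => rfl
  | cons a t =>
    exfalso
    simp only [List.flatten_cons, List.append_eq_nil_iff] at hf
    exact h a (List.mem_cons_self) hf.1

lemma decode (p q : List α) (hp : p ≠ []) (hq : q ≠ []) (hne : p ++ q ≠ q ++ p) :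
    ∀ n : ℕ, ∀ l₁ l₂ : List (List α), l₁.flatten.length ≤ n →
    (∀ u ∈ l₁, u = p ∨ u = q) → (∀ u ∈ l₂, u = p ∨ u = q) →
    l₁.flatten = l₂.flatten → l₁ = l₂ := by
  intro n
  have hne' : ∀ u, u = p ∨ u = q → u ≠ [] := by
    rintro u (rfl | rfl) <;> assumption
  induction n with
  | zero =>
    intro l₁ l₂ hn h₁ h₂ hf
    have hf₁ : l₁.flatten = [] := List.length_eq_zero_iff.mp (by omega)
    have hf₂ : l₂.flatten = [] := by rw [← hf]; exact hf₁
    rw [flatten_eq_nil_forces l₁ (fun u hu => hne' u (h₁ u hu)) hf₁,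
        flatten_eq_nil_forces l₂ (fun u hu => hne' u (h₂ u hu)) hf₂]
  | succ n ih =>
    intro l₁ l₂ hn h₁ h₂ hf
    cases l₁ with
    | nil =>
      exact (flatten_eq_nil_forces l₂ (fun u hu => hne' u (h₂ u hu))
        (by rw [← hf]; rfl)).symm
    | cons a t₁ =>
      cases l₂ with
      | nil =>
        exact flatten_eq_nil_forces (a :: t₁) (fun u hu => hne' u (h₁ u hu))
          (by rw [hf]; rfl)
      | cons b t₂ =>
        by_cases hab : a = b
        · subst hab
          have ht : t₁.flatten = t₂.flatten := by
            simp only [List.flatten_cons] at hf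
            exact List.append_cancel_left hf
          have ha : a ≠ [] := hne' a (h₁ a (List.mem_cons_self))
          have ha1 : 1 ≤ a.length := by
            cases a with
            | nil => exact absurd rfl ha
            | cons _ _ => simp
          have := ih t₁ t₂ (by
            simp only [List.flatten_cons, List.length_append] at hn
            omega) (fun u hu => h₁ u (List.mem_cons_of_mem _ hu))
            (fun u hu => h₂ u (List.mem_cons_of_mem _ hu)) ht
          rw [this]
        · exfalso
          apply hne
          have hf' : a ++ t₁.flatten = b ++ t₂.flatten := by
            simpa only [List.flatten_cons] using hf
          rcases h₁ a (List.mem_cons_self) with ha | ha <;>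
            rcases h₂ b (List.mem_cons_self) with hb | hb
          · exact absurd (ha.trans hb.symm) hab
          · have := key_comm (a.length + b.length) a b t₁ t₂ le_rfl
              (fun u hu => by rw [ha, hb]; exact h₁ u (List.mem_cons_of_mem _ hu))
              (fun u hu => by rw [ha, hb]; exact h₂ u (List.mem_cons_of_mem _ hu)) hf'
            rw [ha, hb] at this
            exact this
          · have := key_comm (a.length + b.length) a b t₁ t₂ le_rfl
              (fun u hu => by rw [ha, hb]; exact (h₁ u (List.mem_cons_of_mem _ hu)).symm)
              (fun u hu => by rw [ha, hb]; exact (h₂ u (List.mem_cons_of_mem _ hu)).symm) hf'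
            rw [ha, hb] at this
            exact this.symm
          · exact absurd (ha.trans hb.symm) hab

end Aux

/-- Shyr–Thierrin: the two-element set `{p, q}` is a code iff `pq ≠ qp`. -/
theorem shyr_thierrin_code_iff {α : Type*} (p q : List α) (hpq : p ≠ q) :
    IsCode ({p, q} : Set (List α)) ↔ p ++ q ≠ q ++ p := by
  constructor
  · intro hcode heq
    have h := hcode [p, q] [q, p] (by simp) (by simp)
      (by simp [heq])
    simp at h
    exact hpq h.1
  · intro hne
    have hp : p ≠ [] := fun h => hne (by simp [h])
    have hq : q ≠ [] := fun h => hne (by simp [h])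
    intro l₁ l₂ h₁ h₂ hf
    refine decode p q hp hq hne l₁.flatten.length l₁ l₂ le_rfl ?_ ?_ hf
    · intro u hu; simpa using h₁ u hu
    · intro u hu; simpa using h₂ u hu
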